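/- A topological space X is exponentiable in Top (i.e., the functor (−) × X has a right adjoint) if and only if X is core-compact. -/

import Mathlib

open CategoryTheory TopologicalSpace

universe u

/-- `U` is way below `V`: every open cover of `V` contains a finite subcover of `U`. -/
def WayBelow {X : Type u} [TopologicalSpace X] (U V : Set X) : Prop :=
  ∀ S : Set (Set X), (∀ s ∈ S, IsOpen s) → V ⊆ ⋃₀ S →
    ∃ T ⊆ S, T.Finite ∧ U ⊆ ⋃₀ T

/-- A space is core-compact if every open neighbourhood of a point contains an open
neighbourhood way below it. -/
def CoreCompact (X : Type u) [TopologicalSpace X] : Prop :=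
  ∀ (x : X) (V : Set X), IsOpen V → x ∈ V →
    ∃ U : Set X, IsOpen U ∧ x ∈ U ∧ WayBelow U V

namespace WBAux

variable {X : Type u} [TopologicalSpace X] {U U' V V' W : Set X}

theorem wb_subset (hV : IsOpen V) (h : WayBelow U V) : U ⊆ V := by
  obtain ⟨T, hTS, -, hUT⟩ := h {V} (by simpa using hV) (by simp)
  refine hUT.trans ?_
  exact Set.sUnion_subset fun t ht => by rw [Set.mem_singleton_iff.1 (hTS ht)]

theorem wb_mono_left (hU : U' ⊆ U) (h : WayBelow U V) : WayBelow U' V := by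
  intro S hS hVS
  obtain ⟨T, hTS, hTfin, hUT⟩ := h S hS hVS
  exact ⟨T, hTS, hTfin, hU.trans hUT⟩

theorem wb_mono_right (h : WayBelow U V) (hV : V ⊆ V') : WayBelow U V' := by
  intro S hS hVS
  exact h S hS (hV.trans hVS)

theorem wb_empty : WayBelow (∅ : Set X) V :=
  fun _ _ _ => ⟨∅, Set.empty_subset _, Set.finite_empty, by simp⟩

theorem wb_union (h1 : WayBelow U V) (h2 : WayBelow U' V) : WayBelow (U ∪ U') V := by
  intro S hS hVS
  obtain ⟨T1, hT1S, hT1f, hUT1⟩ := h1 S hS hVS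
  obtain ⟨T2, hT2S, hT2f, hUT2⟩ := h2 S hS hVS
  refine ⟨T1 ∪ T2, Set.union_subset hT1S hT2S, hT1f.union hT2f, ?_⟩
  rw [Set.sUnion_union]
  exact Set.union_subset_union hUT1 hUT2

theorem wb_sUnion_finite {T : Set (Set X)} (hfin : T.Finite)
    (h : ∀ A ∈ T, WayBelow A V) : WayBelow (⋃₀ T) V := by
  refine Set.Finite.induction_on (motive := fun T _ => (∀ A ∈ T, WayBelow A V) → WayBelow (⋃₀ T) V) T hfin
    (fun _ => by simpa using wb_empty) ?_ h
  intro A T' _ _ ih hh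
  rw [Set.sUnion_insert]
  exact wb_union (hh A (Set.mem_insert _ _)) (ih fun B hB => hh B (Set.mem_insert_of_mem _ hB))

theorem wb_interpolate (hcc : CoreCompact X) (hV : IsOpen V) (h : WayBelow U V) :
    ∃ W : Set X, IsOpen W ∧ WayBelow U W ∧ WayBelow W V := by
  classical
  set S : Set (Set X) := {A | IsOpen A ∧ ∃ B, IsOpen B ∧ WayBelow A B ∧ WayBelow B V} with hSdef
  have hSopen : ∀ s ∈ S, IsOpen s := fun s hs => hs.1
  have hcover : V ⊆ ⋃₀ S := by
    intro x hx
    obtain ⟨B, hBo, hxB, hBV⟩ := hcc x V hV hx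
    obtain ⟨A, hAo, hxA, hAB⟩ := hcc x B hBo hxB
    exact ⟨A, ⟨hAo, B, hBo, hAB, hBV⟩, hxA⟩
  obtain ⟨T, hTS, hTfin, hUT⟩ := h S hSopen hcover
  choose! B hBo hAB hBV using fun A (hA : A ∈ S) => hA.2
  refine ⟨⋃₀ (B '' T), ?_, ?_, ?_⟩
  · exact isOpen_sUnion (by rintro _ ⟨A, hA, rfl⟩; exact hBo A (hTS hA))
  · refine wb_mono_left hUT (wb_sUnion_finite hTfin fun A hA => ?_)
    exact wb_mono_right (hAB A (hTS hA)) (Set.subset_sUnion_of_mem ⟨A, hA, rfl⟩)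
  · exact wb_sUnion_finite (hTfin.image B) (by rintro _ ⟨A, hA, rfl⟩; exact hBV A (hTS hA))

end WBAux

open WBAux

/-- The functor `(−) × X` on the category of all topological spaces. -/
def prodWithFunctor (X : TopCat.{u}) : TopCat.{u} ⥤ TopCat.{u} where
  obj Y := TopCat.of (Y × X)
  map {Y Z} f := TopCat.ofHom (f.hom.prodMap (ContinuousMap.id X))
  map_id := by intro Y; ext p <;> rfl
  map_comp := by intros; ext p <;> rfl

namespace ExpAux

variable (X : TopCat.{u})

/-- Subbasis for the exponential topology. -/
def expGen (Y : TopCat.{u}) : Set (Set C(X, Y)) :=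
  {s | ∃ U V, IsOpen U ∧ IsOpen V ∧ s = {f : C(X, Y) | WayBelow U (f ⁻¹' V)}}

def expTop (Y : TopCat.{u}) : TopologicalSpace C(X, Y) :=
  generateFrom (expGen X Y)

def expObj (Y : TopCat.{u}) : TopCat.{u} := @TopCat.of C(X, Y) (expTop X Y)

theorem isOpen_expObj_gen {Y : TopCat.{u}} {U : Set X} {V : Set Y}
    (hU : IsOpen U) (hV : IsOpen V) :
    @IsOpen C(X, Y) (expTop X Y) {f : C(X, Y) | WayBelow U (f ⁻¹' V)} :=
  TopologicalSpace.GenerateOpen.basic _ ⟨U, V, hU, hV, rfl⟩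

/-- Post-composition is continuous for the exponential topologies. -/
def expMap {Y Z : TopCat.{u}} (f : Y ⟶ Z) : expObj X Y ⟶ expObj X Z :=
  TopCat.ofHom (X := expObj X Y) (Y := expObj X Z) ⟨fun g => f.hom.comp g, by
    refine continuous_generateFrom_iff.mpr ?_
    rintro s ⟨U, V, hU, hV, rfl⟩
    exact isOpen_expObj_gen X hU (hV.preimage f.hom.continuous)⟩

def expFunctor : TopCat.{u} ⥤ TopCat.{u} where
  obj Y := expObj X Y
  map f := expMap X f
  map_id := by intro Y; ext g; rfl
  map_comp := by intros; ext g; rfl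

end ExpAux

namespace ExpAux

variable {X : TopCat.{u}}

/-- Reinterpret a point of `expObj X Y` as a continuous map. -/
def toCM {Y : TopCat.{u}} (f : expObj X Y) : C(X, Y) := f

theorem continuous_eval (hcc : CoreCompact X) {Z Y : TopCat.{u}} (g : Z ⟶ expObj X Y) :
    Continuous fun p : Z × X => toCM (g p.1) p.2 := by
  refine continuous_def.mpr fun V hV => isOpen_prod_iff.mpr fun z x hzx => ?_
  obtain ⟨U, hUo, hxU, hUwb⟩ :=
    hcc x (toCM (g z) ⁻¹' V) (hV.preimage (toCM (g z)).continuous) hzx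
  refine ⟨g ⁻¹' {f : C(X, Y) | WayBelow U (f ⁻¹' V)}, U,
    g.hom.continuous.isOpen_preimage _ (isOpen_expObj_gen X hUo hV), hUo, hUwb, hxU, ?_⟩
  rintro ⟨z', x'⟩ ⟨hz', hx'⟩
  exact wb_subset (hV.preimage (toCM (g z')).continuous) hz' hx'

/-- The curried map. -/
def curryAux {Z Y : TopCat.{u}} (h : C(Z × X, Y)) (z : Z) : C(X, Y) :=
  ⟨fun x => h (z, x), h.continuous.comp (continuous_const.prodMk continuous_id)⟩

theorem continuous_curry (hcc : CoreCompact X) {Z Y : TopCat.{u}} (h : C(Z × X, Y)) :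
    @Continuous Z C(X, Y) _ (expTop X Y) (fun z => curryAux (X := X) h z) := by
  refine continuous_generateFrom_iff.mpr ?_
  rintro s ⟨U, V, hU, hV, rfl⟩
  rw [isOpen_iff_forall_mem_open]
  intro z hz
  have hz : WayBelow U ((curryAux (X := X) h z) ⁻¹' V) := hz
  obtain ⟨U', hU'o, hUU', hU'V⟩ :=
    wb_interpolate hcc (hV.preimage (curryAux (X := X) h z).continuous) hz
  classical
  set S : Set (Set X) :=
    {A | IsOpen A ∧ ∃ B : Set Z, IsOpen B ∧ z ∈ B ∧ B ×ˢ A ⊆ h ⁻¹' V} with hSdef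
  have hSopen : ∀ s ∈ S, IsOpen s := fun s hs => hs.1
  have hcov : (curryAux (X := X) h z) ⁻¹' V ⊆ ⋃₀ S := by
    intro x hx
    have hopen : IsOpen (h ⁻¹' V) := hV.preimage h.continuous
    obtain ⟨B, A, hBo, hAo, hzB, hxA, hsub⟩ := isOpen_prod_iff.mp hopen z x hx
    exact ⟨A, ⟨hAo, B, hBo, hzB, hsub⟩, hxA⟩
  obtain ⟨T, hTS, hTfin, hUT⟩ := hU'V S hSopen hcov
  choose! B hBo hzB hBsub using fun A (hA : A ∈ S) => hA.2
  refine ⟨⋂ A ∈ T, B A, ?_, ?_, ?_⟩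
  · intro z' hz'
    show WayBelow U ((curryAux (X := X) h z') ⁻¹' V)
    refine wb_mono_right hUU' (hUT.trans ?_)
    intro x hx
    obtain ⟨A, hAT, hxA⟩ := hx
    have hz'B : z' ∈ B A := by
      simp only [Set.mem_iInter] at hz'
      exact hz' A hAT
    exact hBsub A (hTS hAT) ⟨hz'B, hxA⟩
  · exact hTfin.isOpen_biInter fun A hA => hBo A (hTS hA)
  · exact Set.mem_iInter₂.mpr fun A hA => hzB A (hTS hA)

variable (X)

def expAdj (hcc : CoreCompact X) : prodWithFunctor X ⊣ expFunctor X :=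
  Adjunction.mkOfHomEquiv
    { homEquiv := fun Z Y =>
        { toFun := fun h => TopCat.ofHom (X := Z) (Y := expObj X Y)
            ⟨fun z => curryAux (X := X) h.hom z, continuous_curry hcc h.hom⟩
          invFun := fun g => TopCat.ofHom ⟨fun p => toCM (g p.1) p.2, continuous_eval hcc g⟩
          left_inv := fun h => TopCat.ext fun p => rfl
          right_inv := fun g =>
            TopCat.ext fun z => ContinuousMap.ext fun x => rfl }
      homEquiv_naturality_left_symm := fun f g => TopCat.ext fun p => rfl
      homEquiv_naturality_right := fun f g =>
        TopCat.ext fun z => ContinuousMap.ext fun x => rfl }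

end ExpAux

section Forward

open ExpAux

/-- The Sierpiński space in universe `u`. -/
def Sier : TopCat.{u} := TopCat.of (ULift.{u} Prop)

theorem isOpen_sier : IsOpen {p : ULift.{u} Prop | p.down} :=
  (continuous_Prop.mp continuous_id).preimage continuous_uliftDown

theorem coreCompact_of_isLeftAdjoint (X : TopCat.{u})
    (h : (prodWithFunctor X).IsLeftAdjoint) : CoreCompact X := by
  classical
  obtain ⟨R, ⟨adj⟩⟩ := h.exists_rightAdjoint
  intro x V hV hxV
  let E : TopCat.{u} := R.obj Sier
  let ev : (prodWithFunctor X).obj E ⟶ Sier := adj.counit.app Sier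
  have key : ∀ (Z : TopCat.{u}) (f : (prodWithFunctor X).obj Z ⟶ Sier.{u}) (z : Z) (xx : X),
      f (z, xx) = ev ((adj.homEquiv Z Sier f) z, xx) := by
    intro Z f z xx
    conv_lhs => rw [← (adj.homEquiv Z Sier).symm_apply_apply f]
    rw [adj.homEquiv_counit]
    rfl
  have inj : ∀ e e' : ↑E, (∀ xx : ↑X, ev (e, xx) = ev (e', xx)) → e = e' := by
    intro e e' hee
    let P : TopCat.{u} := TopCat.of PUnit.{u + 1}
    let c : P ⟶ E := TopCat.ofHom ⟨fun _ => e, continuous_const⟩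
    let c' : P ⟶ E := TopCat.ofHom ⟨fun _ => e', continuous_const⟩
    have hcc' : (adj.homEquiv P Sier).symm c = (adj.homEquiv P Sier).symm c' := by
      rw [adj.homEquiv_counit, adj.homEquiv_counit]
      exact TopCat.ext fun p => hee p.2
    exact ConcreteCategory.congr_hom ((adj.homEquiv P Sier).symm.injective hcc') PUnit.unit
  -- the open subset of `E × X` classified by the counit
  let W : Set (↑E × ↑X) := {p | (ev p).down}
  have hW : IsOpen W := isOpen_sier.preimage ev.hom.continuous
  -- the point of `E` corresponding to the open set `V`
  let P : TopCat.{u} := TopCat.of PUnit.{u + 1}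
  let fV : (prodWithFunctor X).obj P ⟶ Sier :=
    TopCat.ofHom ⟨fun p => ⟨p.2 ∈ V⟩,
      continuous_uliftUp.comp (continuous_Prop.mpr (hV.preimage continuous_snd))⟩
  let eV : ↑E := (adj.homEquiv P Sier fV) PUnit.unit
  have heV : ∀ xx : ↑X, ev (eV, xx) = ULift.up (xx ∈ V) :=
    fun xx => (key P fV PUnit.unit xx).symm
  have hmemW : (eV, x) ∈ W := by
    show (ev (eV, x)).down
    rw [heV]
    exact hxV
  obtain ⟨N, U, hNo, hUo, heVN, hxU, hNU⟩ := isOpen_prod_iff.mp hW eV x hmemW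
  refine ⟨U, hUo, hxU, ?_⟩
  -- now prove `U` is way below `V`
  intro 𝒮 h𝒮o h𝒮cov
  let D := {T : Set (Set ↑X) // T ⊆ 𝒮 ∧ T.Finite}
  let Zt := Option D
  let pred : Zt × ↑X → Prop := fun p => p.1.elim (p.2 ∈ V) (fun a => p.2 ∈ ⋃₀ a.1)
  let topZ : TopologicalSpace Zt :=
    { IsOpen := fun A => (∀ a b : D, ⋃₀ a.1 ⊆ ⋃₀ b.1 → some a ∈ A → some b ∈ A) ∧
        (none ∈ A → ∃ a : D, some a ∈ A)
      isOpen_univ := ⟨fun _ _ _ _ => trivial,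
        fun _ => ⟨⟨∅, Set.empty_subset _, Set.finite_empty⟩, trivial⟩⟩
      isOpen_inter := by
        rintro A B ⟨hA1, hA2⟩ ⟨hB1, hB2⟩
        refine ⟨fun a b hab hm => ⟨hA1 a b hab hm.1, hB1 a b hab hm.2⟩, ?_⟩
        rintro ⟨hnA, hnB⟩
        obtain ⟨a, ha⟩ := hA2 hnA
        obtain ⟨b, hb⟩ := hB2 hnB
        refine ⟨⟨a.1 ∪ b.1, Set.union_subset a.2.1 b.2.1, a.2.2.union b.2.2⟩,
          hA1 a _ (Set.sUnion_mono Set.subset_union_left) ha,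
          hB1 b _ (Set.sUnion_mono Set.subset_union_right) hb⟩
      isOpen_sUnion := by
        intro F hF
        constructor
        · rintro a b hab ⟨A, hAF, hm⟩
          exact ⟨A, hAF, (hF A hAF).1 a b hab hm⟩
        · rintro ⟨A, hAF, hm⟩
          obtain ⟨a, ha⟩ := (hF A hAF).2 hm
          exact ⟨a, A, hAF, ha⟩ }
  let ZT : TopCat.{u} := @TopCat.of Zt topZ
  have hpredOpen : IsOpen {p : ↑ZT × ↑X | pred p} := by
    rw [isOpen_prod_iff]
    rintro (_ | a) xx hm
    · -- at infinity
      obtain ⟨s₀, hs₀S, hxs₀⟩ := h𝒮cov hm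
      refine ⟨{z : Zt | z = none ∨ ∃ b : D, z = some b ∧ s₀ ⊆ ⋃₀ b.1}, s₀ ∩ V,
        ?_, (h𝒮o s₀ hs₀S).inter hV, Or.inl rfl, ⟨hxs₀, hm⟩, ?_⟩
      · show (∀ _ _, _) ∧ _
        constructor
        · rintro a b hab (h | ⟨b', hb', hs⟩)
          · exact absurd h (by simp)
          · obtain rfl : a = b' := by injection hb'
            exact Or.inr ⟨b, rfl, hs.trans hab⟩
        · intro _
          refine ⟨⟨{s₀}, Set.singleton_subset_iff.mpr hs₀S, Set.finite_singleton _⟩,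
            Or.inr ⟨_, rfl, by rw [Set.sUnion_singleton]⟩⟩
      · rintro ⟨z', x'⟩ ⟨hz', hx'1, hx'2⟩
        rcases hz' with rfl | ⟨b, rfl, hs⟩
        · exact hx'2
        · exact hs hx'1
    · -- at a finite family
      refine ⟨{z : Zt | ∃ b : D, z = some b ∧ ⋃₀ a.1 ⊆ ⋃₀ b.1}, ⋃₀ a.1,
        ?_, isOpen_sUnion fun s hs => h𝒮o s (a.2.1 hs), ⟨a, rfl, subset_rfl⟩, hm, ?_⟩
      · show (∀ _ _, _) ∧ _
        constructor
        · rintro a' b hab ⟨b', hb', hs⟩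
          obtain rfl : a' = b' := by injection hb'
          exact ⟨b, rfl, hs.trans hab⟩
        · rintro ⟨b, hb, -⟩
          exact absurd hb (by simp)
      · rintro ⟨z', x'⟩ ⟨⟨b, rfl, hs⟩, hx'⟩
        exact hs hx'
  let fD : (prodWithFunctor X).obj ZT ⟶ Sier :=
    TopCat.ofHom ⟨fun p => ⟨pred p⟩, continuous_uliftUp.comp (continuous_Prop.mpr hpredOpen)⟩
  let g := adj.homEquiv ZT Sier fD
  have hgnone : g none = eV := by
    refine inj _ _ fun xx => ?_
    have h1 : ev (g none, xx) = ULift.up (xx ∈ V) := (key ZT fD none xx).symm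
    rw [h1, heV]
  have hpre : IsOpen (⇑g ⁻¹' N) := g.hom.continuous.isOpen_preimage N hNo
  have hpre2 : (∀ a b : D, ⋃₀ a.1 ⊆ ⋃₀ b.1 → some a ∈ ⇑g ⁻¹' N → some b ∈ ⇑g ⁻¹' N) ∧
      (none ∈ ⇑g ⁻¹' N → ∃ a : D, some a ∈ ⇑g ⁻¹' N) := hpre
  have hnoneN : none ∈ ⇑g ⁻¹' N := by
    show g none ∈ N
    rw [hgnone]
    exact heVN
  obtain ⟨a, ha⟩ := hpre2.2 hnoneN
  refine ⟨a.1, a.2.1, a.2.2, ?_⟩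
  intro x' hx'
  have hmem : (g (some a), x') ∈ W := hNU ⟨ha, hx'⟩
  have : (ev (g (some a), x')).down := hmem
  rwa [← key ZT fD (some a) x'] at this

end Forward

/-- **Exponentiable spaces are exactly the core-compact ones.** A topological space `X`
is exponentiable in the category of all topological spaces (the functor `(−) × X` has a
right adjoint) if and only if `X` is core-compact. -/
theorem exponentiable_iff_coreCompact (X : TopCat.{u}) :
    (prodWithFunctor X).IsLeftAdjoint ↔ CoreCompact X := by
  constructor
  · exact coreCompact_of_isLeftAdjoint X
  · intro hcc
    exact ⟨⟨ExpAux.expFunctor X, ⟨ExpAux.expAdj X hcc⟩⟩⟩
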